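/- Let H be a finite-dimensional Hopf algebra over a field k such that the trivial module 𝟙 is projective. Then every H-module is projective, and hence H is semisimple. -/

import Mathlib

/-- The trivial `H`-module structure on `k`: `H` acts on `k` through the counit
(which is an algebra homomorphism `H →ₐ[k] k` for a bialgebra `H`). -/
noncomputable def trivialModule (k H : Type*) [CommRing k] [Ring H] [Bialgebra k H] :
    Module H k :=
  Module.compHom k (Bialgebra.counitAlgHom k H).toRingHom

namespace Stmt9Aux

open Coalgebra HopfAlgebra TensorProduct

variable {k H : Type*} [Field k] [Ring H] [HopfAlgebra k H]

variable (k) in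
/-- A choice of finite set of pairs representing `comul x`. -/
noncomputable def creps (x : H) : Finset (H × H) :=
  (TensorProduct.exists_finset (R := k) (Coalgebra.comul x)).choose

theorem creps_eq (x : H) :
    ∑ z ∈ creps k x, z.1 ⊗ₜ[k] z.2 = Coalgebra.comul (R := k) x :=
  (TensorProduct.exists_finset (R := k) (Coalgebra.comul x)).choose_spec.symm

variable (k) in
/-- The representation of `comul x` packaged as a `Coalgebra.Repr`. -/
noncomputable def mkRepr (x : H) : Coalgebra.Repr k x (H × H) :=
  { index := creps k x
    left := Prod.fst
    right := Prod.snd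
    eq := creps_eq x }

@[simp] theorem mkRepr_index (x : H) : (mkRepr k x).index = creps k x := rfl
@[simp] theorem mkRepr_left (x : H) (z : H × H) : (mkRepr k x).left z = z.1 := rfl
@[simp] theorem mkRepr_right (x : H) (z : H × H) : (mkRepr k x).right z = z.2 := rfl

theorem sum_counit_fst (x : H) :
    ∑ z ∈ creps k x, counit (R := k) z.1 • z.2 = x := by
  have h2 := congrArg (TensorProduct.lid k H) (sum_counit_tmul_eq (R := k) (mkRepr k x))
  simpa only [map_sum, TensorProduct.lid_tmul, one_smul, mkRepr_index, mkRepr_left,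
    mkRepr_right] using h2

theorem sum_counit_snd (x : H) :
    ∑ z ∈ creps k x, counit (R := k) z.2 • z.1 = x := by
  have h2 := congrArg (TensorProduct.rid k H) (sum_tmul_counit_eq (R := k) (mkRepr k x))
  simpa only [map_sum, TensorProduct.rid_tmul, one_smul, mkRepr_index, mkRepr_left,
    mkRepr_right] using h2

theorem sum_mul_antipode (x : H) :
    ∑ z ∈ creps k x, z.1 * antipode (R := k) z.2 = counit (R := k) x • (1 : H) := by
  simpa using sum_mul_antipode_eq_smul (R := k) (mkRepr k x)

theorem sum_antipode_mul (x : H) :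
    ∑ z ∈ creps k x, antipode (R := k) z.1 * z.2 = counit (R := k) x • (1 : H) := by
  simpa using sum_antipode_mul_eq_smul (R := k) (mkRepr k x)

/-- A representation of `comul (x * y)` from those of `x` and `y`. -/
noncomputable def mulRepr (x y : H) : Coalgebra.Repr k (x * y) ((H × H) × (H × H)) where
  index := creps k x ×ˢ creps k y
  left := fun p => p.1.1 * p.2.1
  right := fun p => p.1.2 * p.2.2
  eq := by
    rw [Finset.sum_product]
    simp_rw [← Algebra.TensorProduct.tmul_mul_tmul]
    rw [← Finset.sum_mul_sum, creps_eq, creps_eq, ← Bialgebra.comul_mul]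

theorem sum_antipode_prod (x y : H) :
    ∑ p ∈ creps k x, ∑ q ∈ creps k y,
      antipode (R := k) (p.1 * q.1) * (p.2 * q.2)
      = counit (R := k) (x * y) • (1 : H) := by
  have h2 : ∑ z ∈ creps k x ×ˢ creps k y,
      antipode (R := k) (z.1.1 * z.2.1) * (z.1.2 * z.2.2)
      = counit (R := k) (x * y) • (1 : H) := sum_antipode_mul_eq_smul (R := k) (mulRepr x y)
  rw [Finset.sum_product] at h2
  exact h2

/-- Coassociativity switch in uniform form. -/
theorem switchPhi {M : Type*} [AddCommMonoid M] [Module k M]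
    (Φ : H ⊗[k] (H ⊗[k] H) →ₗ[k] M) (f g h : H →ₗ[k] H) (x : H) :
    ∑ i ∈ creps k x, ∑ t ∈ creps k i.1, Φ (f t.1 ⊗ₜ (g t.2 ⊗ₜ h i.2))
    = ∑ i ∈ creps k x, ∑ t ∈ creps k i.2, Φ (f i.1 ⊗ₜ (g t.1 ⊗ₜ h t.2)) := by
  have h2 := congrArg Φ (sum_map_tmul_tmul_eq (R := k) f g h x (repr := mkRepr k x)
    (a₁ := fun i => mkRepr k i.1) (a₂ := fun i => mkRepr k i.2))
  simpa only [map_sum, mkRepr_index, mkRepr_left, mkRepr_right] using h2.symm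

theorem sum4_comm {α β : Type*} {M : Type*} [AddCommMonoid M] (s : Finset α)
    (t : α → Finset β) (u : Finset α) (v : α → Finset β) (f : α → β → α → β → M) :
    (∑ i ∈ s, ∑ p ∈ t i, ∑ j ∈ u, ∑ q ∈ v j, f i p j q)
    = ∑ j ∈ u, ∑ q ∈ v j, ∑ i ∈ s, ∑ p ∈ t i, f i p j q := by
  calc (∑ i ∈ s, ∑ p ∈ t i, ∑ j ∈ u, ∑ q ∈ v j, f i p j q)
      = ∑ i ∈ s, ∑ j ∈ u, ∑ p ∈ t i, ∑ q ∈ v j, f i p j q :=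
        Finset.sum_congr rfl fun i _ => Finset.sum_comm
    _ = ∑ j ∈ u, ∑ i ∈ s, ∑ p ∈ t i, ∑ q ∈ v j, f i p j q := Finset.sum_comm
    _ = ∑ j ∈ u, ∑ q ∈ v j, ∑ i ∈ s, ∑ p ∈ t i, f i p j q := by
        refine Finset.sum_congr rfl fun j _ => ?_
        calc (∑ i ∈ s, ∑ p ∈ t i, ∑ q ∈ v j, f i p j q)
            = ∑ i ∈ s, ∑ q ∈ v j, ∑ p ∈ t i, f i p j q :=
              Finset.sum_congr rfl fun i _ => Finset.sum_comm
          _ = ∑ q ∈ v j, ∑ i ∈ s, ∑ p ∈ t i, f i p j q := Finset.sum_comm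

noncomputable def mul3 : H ⊗[k] (H ⊗[k] H) →ₗ[k] H :=
  LinearMap.mul' k H ∘ₗ LinearMap.lTensor H (LinearMap.mul' k H)

@[simp] theorem mul3_apply (x y z : H) : (mul3 (x ⊗ₜ[k] (y ⊗ₜ z)) : H) = x * (y * z) := rfl

set_option maxHeartbeats 2000000 in
/-- The antipode is anti-multiplicative. -/
theorem antipode_anti (a b : H) :
    antipode (R := k) (a * b) = antipode (R := k) b * antipode (R := k) a := by
  classical
  set S : H →ₗ[k] H := antipode (R := k) with hSdef
  -- Step A : the fully right-nested quadruple sum collapses to `S (a * b)`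
  have hA : (∑ i ∈ creps k a, ∑ j ∈ creps k b, ∑ p ∈ creps k i.2, ∑ q ∈ creps k j.2,
      S (i.1 * j.1) * ((p.1 * q.1) * (S q.2 * S p.2)))
      = S (a * b) := by
    have inner : ∀ i j : H × H,
        (∑ p ∈ creps k i.2, ∑ q ∈ creps k j.2, (p.1 * q.1) * (S q.2 * S p.2))
        = (counit (R := k) i.2 * counit (R := k) j.2) • (1 : H) := by
      intro i j
      have e1 : ∀ p : H × H, (∑ q ∈ creps k j.2, (p.1 * q.1) * (S q.2 * S p.2))
          = p.1 * ((∑ q ∈ creps k j.2, q.1 * S q.2) * S p.2) := by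
        intro p
        rw [Finset.sum_mul, Finset.mul_sum]
        exact Finset.sum_congr rfl fun q _ => by simp only [mul_assoc]
      calc (∑ p ∈ creps k i.2, ∑ q ∈ creps k j.2, (p.1 * q.1) * (S q.2 * S p.2))
          = ∑ p ∈ creps k i.2, p.1 * ((counit (R := k) j.2 • (1 : H)) * S p.2) := by
            refine Finset.sum_congr rfl fun p _ => ?_
            rw [e1 p, sum_mul_antipode j.2]
        _ = counit (R := k) j.2 • (∑ p ∈ creps k i.2, p.1 * S p.2) := by
            rw [Finset.smul_sum]
            refine Finset.sum_congr rfl fun p _ => ?_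
            simp only [smul_mul_assoc, one_mul, mul_smul_comm]
        _ = counit (R := k) j.2 • (counit (R := k) i.2 • (1 : H)) := by
            rw [sum_mul_antipode i.2]
        _ = (counit (R := k) i.2 * counit (R := k) j.2) • (1 : H) := by
            rw [smul_smul, mul_comm]
    calc (∑ i ∈ creps k a, ∑ j ∈ creps k b, ∑ p ∈ creps k i.2, ∑ q ∈ creps k j.2,
          S (i.1 * j.1) * ((p.1 * q.1) * (S q.2 * S p.2)))
        = ∑ i ∈ creps k a, ∑ j ∈ creps k b,
            (counit (R := k) i.2 * counit (R := k) j.2) • S (i.1 * j.1) := by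
          refine Finset.sum_congr rfl fun i _ => Finset.sum_congr rfl fun j _ => ?_
          simp_rw [← Finset.mul_sum]
          rw [inner i j, mul_smul_comm, mul_one]
      _ = S ((∑ i ∈ creps k a, counit (R := k) i.2 • i.1) *
            (∑ j ∈ creps k b, counit (R := k) j.2 • j.1)) := by
          rw [Finset.sum_mul_sum, map_sum]
          refine Finset.sum_congr rfl fun i _ => ?_
          rw [map_sum]
          refine Finset.sum_congr rfl fun j _ => ?_
          rw [smul_mul_smul_comm, map_smul]
      _ = S (a * b) := by rw [sum_counit_snd a, sum_counit_snd b]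
  -- Step D : the fully left-nested quadruple sum collapses to `S b * S a`
  have hD : (∑ i ∈ creps k a, ∑ p ∈ creps k i.1, ∑ j ∈ creps k b, ∑ q ∈ creps k j.1,
      S (p.1 * q.1) * ((p.2 * q.2) * (S j.2 * S i.2)))
      = S b * S a := by
    have reord : (∑ i ∈ creps k a, ∑ p ∈ creps k i.1, ∑ j ∈ creps k b, ∑ q ∈ creps k j.1,
        S (p.1 * q.1) * ((p.2 * q.2) * (S j.2 * S i.2)))
        = ∑ i ∈ creps k a, ∑ j ∈ creps k b, ∑ p ∈ creps k i.1, ∑ q ∈ creps k j.1,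
          S (p.1 * q.1) * ((p.2 * q.2) * (S j.2 * S i.2)) :=
      Finset.sum_congr rfl fun i _ => Finset.sum_comm
    rw [reord]
    have inner : ∀ i j : H × H,
        (∑ p ∈ creps k i.1, ∑ q ∈ creps k j.1,
          S (p.1 * q.1) * ((p.2 * q.2) * (S j.2 * S i.2)))
        = (counit (R := k) i.1 * counit (R := k) j.1) • (S j.2 * S i.2) := by
      intro i j
      have hprod := sum_antipode_prod (k := k) i.1 j.1
      calc (∑ p ∈ creps k i.1, ∑ q ∈ creps k j.1,
            S (p.1 * q.1) * ((p.2 * q.2) * (S j.2 * S i.2)))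
          = (∑ p ∈ creps k i.1, ∑ q ∈ creps k j.1,
              S (p.1 * q.1) * (p.2 * q.2)) * (S j.2 * S i.2) := by
            rw [Finset.sum_mul]
            refine Finset.sum_congr rfl fun p _ => ?_
            rw [Finset.sum_mul]
            exact Finset.sum_congr rfl fun q _ => by simp only [mul_assoc]
        _ = (counit (R := k) (i.1 * j.1) • (1 : H)) * (S j.2 * S i.2) := by rw [hprod]
        _ = (counit (R := k) i.1 * counit (R := k) j.1) • (S j.2 * S i.2) := by
            rw [Bialgebra.counit_mul, smul_mul_assoc, one_mul]
    calc (∑ i ∈ creps k a, ∑ j ∈ creps k b, ∑ p ∈ creps k i.1, ∑ q ∈ creps k j.1,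
          S (p.1 * q.1) * ((p.2 * q.2) * (S j.2 * S i.2)))
        = ∑ i ∈ creps k a, ∑ j ∈ creps k b,
            (counit (R := k) i.1 * counit (R := k) j.1) • (S j.2 * S i.2) :=
          Finset.sum_congr rfl fun i _ => Finset.sum_congr rfl fun j _ => inner i j
      _ = (∑ j ∈ creps k b, counit (R := k) j.1 • S j.2) *
            (∑ i ∈ creps k a, counit (R := k) i.1 • S i.2) := by
          rw [Finset.sum_mul_sum]
          refine Finset.sum_comm.trans (Finset.sum_congr rfl fun j _ =>
            Finset.sum_congr rfl fun i _ => ?_)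
          rw [smul_mul_smul_comm, mul_comm (counit (R := k) i.1)]
      _ = S b * S a := by
          have h1 : (∑ j ∈ creps k b, counit (R := k) j.1 • S j.2) = S b := by
            simp_rw [← map_smul]
            rw [← map_sum, sum_counit_fst b]
          have h2 : (∑ i ∈ creps k a, counit (R := k) i.1 • S i.2) = S a := by
            simp_rw [← map_smul]
            rw [← map_sum, sum_counit_fst a]
          rw [h1, h2]
  -- connect the two quadruple sums using coassociativity
  rw [← hA, ← hD]
  calc (∑ i ∈ creps k a, ∑ j ∈ creps k b, ∑ p ∈ creps k i.2, ∑ q ∈ creps k j.2,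
        S (i.1 * j.1) * ((p.1 * q.1) * (S q.2 * S p.2)))
      = ∑ i ∈ creps k a, ∑ p ∈ creps k i.2, ∑ j ∈ creps k b, ∑ q ∈ creps k j.2,
          S (i.1 * j.1) * ((p.1 * q.1) * (S q.2 * S p.2)) :=
        Finset.sum_congr rfl fun i _ => Finset.sum_comm
    _ = ∑ j ∈ creps k b, ∑ q ∈ creps k j.2, ∑ i ∈ creps k a, ∑ p ∈ creps k i.2,
          S (i.1 * j.1) * ((p.1 * q.1) * (S q.2 * S p.2)) :=
        sum4_comm _ _ _ _ _
    _ = ∑ j ∈ creps k b, ∑ q ∈ creps k j.2, ∑ i ∈ creps k a, ∑ p ∈ creps k i.1,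
          S (p.1 * j.1) * ((p.2 * q.1) * (S q.2 * S i.2)) := by
        refine Finset.sum_congr rfl fun j _ => Finset.sum_congr rfl fun q _ => ?_
        have hsw := switchPhi (mul3) (S ∘ₗ LinearMap.mulRight k j.1)
          (LinearMap.mulRight k q.1)
          (LinearMap.mulLeft k (S q.2) ∘ₗ S) a
        simpa only [mul3_apply, LinearMap.comp_apply, LinearMap.mulRight_apply,
          LinearMap.mulLeft_apply] using hsw.symm
    _ = ∑ i ∈ creps k a, ∑ p ∈ creps k i.1, ∑ j ∈ creps k b, ∑ q ∈ creps k j.2,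
          S (p.1 * j.1) * ((p.2 * q.1) * (S q.2 * S i.2)) :=
        (sum4_comm _ _ _ _ _).symm
    _ = ∑ i ∈ creps k a, ∑ p ∈ creps k i.1, ∑ j ∈ creps k b, ∑ q ∈ creps k j.1,
          S (p.1 * q.1) * ((p.2 * q.2) * (S j.2 * S i.2)) := by
        refine Finset.sum_congr rfl fun i _ => Finset.sum_congr rfl fun p _ => ?_
        have hsw := switchPhi (mul3) (S ∘ₗ LinearMap.mulLeft k p.1)
          (LinearMap.mulLeft k p.2)
          (LinearMap.mulRight k (S i.2) ∘ₗ S) b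
        simpa only [mul3_apply, LinearMap.comp_apply, LinearMap.mulRight_apply,
          LinearMap.mulLeft_apply] using hsw.symm


section Integral

variable {k H : Type*} [Field k] [Ring H] [HopfAlgebra k H]

/-- If `Λ` is a left integral then `Δ(g)·Δ(Λ) = ε(g)·Δ(Λ)`. -/
theorem star_integral {Λ : H} (hΛ : ∀ g : H, g * Λ = counit (R := k) g • Λ) (g : H) :
    ∑ t ∈ creps k g, ∑ s ∈ creps k Λ, (t.1 * s.1) ⊗ₜ[k] (t.2 * s.2)
    = counit (R := k) g • ∑ s ∈ creps k Λ, s.1 ⊗ₜ[k] s.2 := by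
  have h1 : ∑ t ∈ creps k g, ∑ s ∈ creps k Λ, (t.1 * s.1) ⊗ₜ[k] (t.2 * s.2)
      = (∑ t ∈ creps k g, t.1 ⊗ₜ[k] t.2) * (∑ s ∈ creps k Λ, s.1 ⊗ₜ[k] s.2) := by
    rw [Finset.sum_mul_sum]
    exact Finset.sum_congr rfl fun t _ => Finset.sum_congr rfl fun s _ =>
      (Algebra.TensorProduct.tmul_mul_tmul _ _ _ _).symm
  rw [h1, creps_eq, creps_eq, ← Bialgebra.comul_mul, hΛ g, map_smul, ← creps_eq Λ]

set_option maxHeartbeats 1000000 in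
/-- The key identity: `∑ Λ₍₁₎ ⊗ S(Λ₍₂₎)h = ∑ hΛ₍₁₎ ⊗ S(Λ₍₂₎)` for a left integral `Λ`. -/
theorem key_identity {Λ : H} (hΛ : ∀ g : H, g * Λ = counit (R := k) g • Λ) (h : H) :
    ∑ s ∈ creps k Λ, s.1 ⊗ₜ[k] (antipode (R := k) s.2 * h)
    = ∑ s ∈ creps k Λ, (h * s.1) ⊗ₜ[k] antipode (R := k) s.2 := by
  classical
  set S : H →ₗ[k] H := antipode (R := k) with hSdef
  -- step 1+2 : expand `h` through its counit and absorb comultiplication legs into `Λ`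
  have step12 : ∑ s ∈ creps k Λ, s.1 ⊗ₜ[k] (S s.2 * h)
      = ∑ i ∈ creps k h, ∑ t ∈ creps k i.1, ∑ s ∈ creps k Λ,
          (t.1 * s.1) ⊗ₜ[k] (S (t.2 * s.2) * i.2) := by
    have expand : ∑ s ∈ creps k Λ, s.1 ⊗ₜ[k] (S s.2 * h)
        = ∑ i ∈ creps k h, counit (R := k) i.1 •
            ∑ s ∈ creps k Λ, s.1 ⊗ₜ[k] (S s.2 * i.2) := by
      calc ∑ s ∈ creps k Λ, s.1 ⊗ₜ[k] (S s.2 * h)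
          = ∑ s ∈ creps k Λ, ∑ i ∈ creps k h,
              counit (R := k) i.1 • (s.1 ⊗ₜ[k] (S s.2 * i.2)) := by
            refine Finset.sum_congr rfl fun s _ => ?_
            conv_lhs => rw [← sum_counit_fst (k := k) h]
            rw [Finset.mul_sum, TensorProduct.tmul_sum]
            exact Finset.sum_congr rfl fun i _ => by
              rw [mul_smul_comm, TensorProduct.tmul_smul]
        _ = ∑ i ∈ creps k h, ∑ s ∈ creps k Λ,
              counit (R := k) i.1 • (s.1 ⊗ₜ[k] (S s.2 * i.2)) := Finset.sum_comm
        _ = ∑ i ∈ creps k h, counit (R := k) i.1 •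
              ∑ s ∈ creps k Λ, s.1 ⊗ₜ[k] (S s.2 * i.2) :=
            Finset.sum_congr rfl fun i _ => (Finset.smul_sum).symm
    rw [expand]
    refine Finset.sum_congr rfl fun i _ => ?_
    set γ : H ⊗[k] H →ₗ[k] H ⊗[k] H :=
      TensorProduct.map LinearMap.id ((LinearMap.mulRight k i.2) ∘ₗ S) with hγ
    have hγtm : ∀ u v : H, γ (u ⊗ₜ[k] v) = u ⊗ₜ[k] (S v * i.2) := fun u v => by
      simp [hγ]
    have hγ2 := congrArg γ (star_integral (k := k) hΛ i.1)
    rw [map_smul, map_sum, map_sum] at hγ2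
    simp_rw [map_sum, hγtm] at hγ2
    exact hγ2.symm
  rw [step12]
  -- step 3 : antipode is anti-multiplicative
  have step3 : ∑ i ∈ creps k h, ∑ t ∈ creps k i.1, ∑ s ∈ creps k Λ,
        (t.1 * s.1) ⊗ₜ[k] (S (t.2 * s.2) * i.2)
      = ∑ s ∈ creps k Λ, ∑ i ∈ creps k h, ∑ t ∈ creps k i.1,
        (t.1 * s.1) ⊗ₜ[k] (S s.2 * (S t.2 * i.2)) := by
    calc ∑ i ∈ creps k h, ∑ t ∈ creps k i.1, ∑ s ∈ creps k Λ,
          (t.1 * s.1) ⊗ₜ[k] (S (t.2 * s.2) * i.2)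
        = ∑ i ∈ creps k h, ∑ s ∈ creps k Λ, ∑ t ∈ creps k i.1,
            (t.1 * s.1) ⊗ₜ[k] (S (t.2 * s.2) * i.2) :=
          Finset.sum_congr rfl fun i _ => Finset.sum_comm
      _ = ∑ s ∈ creps k Λ, ∑ i ∈ creps k h, ∑ t ∈ creps k i.1,
            (t.1 * s.1) ⊗ₜ[k] (S (t.2 * s.2) * i.2) := Finset.sum_comm
      _ = ∑ s ∈ creps k Λ, ∑ i ∈ creps k h, ∑ t ∈ creps k i.1,
            (t.1 * s.1) ⊗ₜ[k] (S s.2 * (S t.2 * i.2)) := by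
          refine Finset.sum_congr rfl fun s _ => Finset.sum_congr rfl fun i _ =>
            Finset.sum_congr rfl fun t _ => ?_
          rw [antipode_anti (k := k) t.2 s.2, mul_assoc]
  rw [step3]
  -- step 4 : coassociativity switch on the legs of `h`
  have step4 : ∀ s : H × H,
      (∑ i ∈ creps k h, ∑ t ∈ creps k i.1, (t.1 * s.1) ⊗ₜ[k] (S s.2 * (S t.2 * i.2)))
      = ∑ i ∈ creps k h, ∑ t ∈ creps k i.2, (i.1 * s.1) ⊗ₜ[k] (S s.2 * (S t.1 * t.2)) := by
    intro s
    have hsw := switchPhi (k := k)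
      (TensorProduct.map LinearMap.id ((LinearMap.mulLeft k (S s.2)) ∘ₗ LinearMap.mul' k H))
      (LinearMap.mulRight k s.1) S LinearMap.id h
    simpa only [TensorProduct.map_tmul, LinearMap.id_apply, LinearMap.comp_apply,
      LinearMap.mulRight_apply, LinearMap.mulLeft_apply, LinearMap.mul'_apply] using hsw
  rw [Finset.sum_congr rfl fun s _ => step4 s]
  -- step 5+6 : collapse the antipode pair and reassemble `h`
  refine Finset.sum_congr rfl fun s _ => ?_
  have step5 : ∀ i : H × H,
      (∑ t ∈ creps k i.2, (i.1 * s.1) ⊗ₜ[k] (S s.2 * (S t.1 * t.2)))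
      = counit (R := k) i.2 • ((i.1 * s.1) ⊗ₜ[k] S s.2) := by
    intro i
    rw [← TensorProduct.tmul_sum, ← Finset.mul_sum, sum_antipode_mul (k := k) i.2]
    rw [mul_smul_comm, mul_one, TensorProduct.tmul_smul]
  rw [Finset.sum_congr rfl fun i _ => step5 i]
  have : ∑ i ∈ creps k h, counit (R := k) i.2 • ((i.1 * s.1) ⊗ₜ[k] S s.2)
      = ((∑ i ∈ creps k h, counit (R := k) i.2 • i.1) * s.1) ⊗ₜ[k] S s.2 := by
    rw [Finset.sum_mul]
    rw [TensorProduct.sum_tmul]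
    exact Finset.sum_congr rfl fun i _ => by rw [smul_mul_assoc, TensorProduct.smul_tmul']
  rw [this, sum_counit_snd h]

/-- Maschke-type theorem: a Hopf algebra with a normalized left integral is semisimple. -/
theorem isSemisimpleRing_of_integral (Λ : H)
    (hΛ : ∀ g : H, g * Λ = counit (R := k) g • Λ) (hΛ1 : counit (R := k) Λ = 1) :
    IsSemisimpleRing H := by
  classical
  set S : H →ₗ[k] H := antipode (R := k) with hSdef
  refine { toComplementedLattice := ⟨?_⟩ }
  intro N
  obtain ⟨q, hq⟩ := Submodule.exists_isCompl (N.restrictScalars k)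
  set p : H →ₗ[k] H :=
    (N.restrictScalars k).subtype ∘ₗ (N.restrictScalars k).linearProjOfIsCompl q hq with hp
  have hpmem : ∀ x : H, p x ∈ N := fun x =>
    ((N.restrictScalars k).linearProjOfIsCompl q hq x).2
  have hpid : ∀ x : H, x ∈ N → p x = x := by
    intro x hx
    have := Submodule.linearProjOfIsCompl_apply_left hq ⟨x, hx⟩
    simp only [hp, LinearMap.comp_apply]
    erw [this]
    rfl
  -- the averaged projection
  set π : H →ₗ[H] H :=
    { toFun := fun x => ∑ s ∈ creps k Λ, s.1 * p (S s.2 * x)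
      map_add' := fun x y => by
        simp only [mul_add, map_add]
        rw [← Finset.sum_add_distrib]
      map_smul' := fun h x => by
        simp only [smul_eq_mul, RingHom.id_apply]
        set β : H ⊗[k] H →ₗ[k] H := TensorProduct.lift (LinearMap.mk₂ k
          (fun u v => u * p (v * x))
          (fun u u' v => by simp only [add_mul])
          (fun c u v => by simp only [smul_mul_assoc])
          (fun u v v' => by simp only [add_mul, map_add, mul_add])
          (fun c u v => by simp only [smul_mul_assoc, map_smul, mul_smul_comm])) with hβ
        have hβtm : ∀ u v : H, β (u ⊗ₜ[k] v) = u * p (v * x) := fun u v => by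
          simp [hβ]
        have hkey := congrArg β (key_identity (k := k) hΛ h)
        rw [map_sum, map_sum] at hkey
        simp_rw [hβtm] at hkey
        calc ∑ s ∈ creps k Λ, s.1 * p (S s.2 * (h * x))
            = ∑ s ∈ creps k Λ, s.1 * p ((S s.2 * h) * x) := by
              refine Finset.sum_congr rfl fun s _ => ?_
              rw [mul_assoc]
          _ = ∑ s ∈ creps k Λ, (h * s.1) * p (S s.2 * x) := hkey
          _ = h * ∑ s ∈ creps k Λ, s.1 * p (S s.2 * x) := by
              rw [Finset.mul_sum]
              exact Finset.sum_congr rfl fun s _ => by rw [mul_assoc] } with hπ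
  have hπval : ∀ x : H, π x = ∑ s ∈ creps k Λ, s.1 * p (S s.2 * x) := fun x => rfl
  have hπmem : ∀ x : H, π x ∈ N := by
    intro x
    rw [hπval]
    refine Submodule.sum_mem N fun s _ => ?_
    have := hpmem (S s.2 * x)
    exact N.smul_mem s.1 this
  have hπid : ∀ x : H, x ∈ N → π x = x := by
    intro x hx
    rw [hπval]
    have he : ∀ s : H × H, s.1 * p (S s.2 * x) = s.1 * (S s.2 * x) := by
      intro s
      have hm : S s.2 * x ∈ N := by
        have := N.smul_mem (S s.2) hx
        rwa [smul_eq_mul] at this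
      rw [hpid _ hm]
    rw [Finset.sum_congr rfl fun s _ => he s]
    simp_rw [← mul_assoc]
    rw [← Finset.sum_mul, sum_mul_antipode (k := k) Λ, hΛ1, one_smul, one_mul]
  refine ⟨LinearMap.ker π, ?_, ?_⟩
  · rw [Submodule.disjoint_def]
    intro x hxN hxker
    have h0 : π x = 0 := hxker
    rw [hπid x hxN] at h0
    exact h0
  · rw [codisjoint_iff_le_sup]
    intro x _
    have hxdecomp : x = π x + (x - π x) := by abel
    have hmem2 : x - π x ∈ LinearMap.ker π := by
      rw [LinearMap.mem_ker, map_sub, hπid (π x) (hπmem x), sub_self]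
    rw [hxdecomp]
    exact Submodule.add_mem_sup (hπmem x) hmem2

end Integral

end Stmt9Aux

section Final

open Coalgebra HopfAlgebra TensorProduct Stmt9Aux

variable {k H : Type*} [Field k] [Ring H] [HopfAlgebra k H]

theorem projective_of_isSemisimpleRing (R : Type*) [Ring R] [IsSemisimpleRing R]
    (M : Type*) [AddCommGroup M] [Module R M] : Module.Projective R M := by
  have hF : Module.Projective R (M →₀ R) := Module.Projective.of_basis Finsupp.basisSingleOne
  let π₀ : (M →₀ R) →ₗ[R] M := Finsupp.linearCombination R id
  have hsurj : Function.Surjective π₀ := Finsupp.linearCombination_id_surjective R M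
  obtain ⟨q, hq⟩ := exists_isCompl (LinearMap.ker π₀)
  let f : q →ₗ[R] M := π₀ ∘ₗ q.subtype
  have hker : LinearMap.ker f = ⊥ := by
    rw [Submodule.eq_bot_iff]
    rintro ⟨x, hx⟩ hfx
    have hxker : x ∈ LinearMap.ker π₀ := hfx
    have : x ∈ LinearMap.ker π₀ ⊓ q := ⟨hxker, hx⟩
    rw [hq.inf_eq_bot] at this
    simpa using this
  have hinj : Function.Injective f := by
    intro a b hab
    have h1 : (a : M →₀ R) - b ∈ LinearMap.ker π₀ := by
      rw [LinearMap.mem_ker, map_sub]; exact sub_eq_zero.mpr hab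
    have h2 : (a : M →₀ R) - b ∈ q := q.sub_mem a.2 b.2
    have h3 : (a : M →₀ R) - b ∈ LinearMap.ker π₀ ⊓ q := ⟨h1, h2⟩
    rw [hq.inf_eq_bot, Submodule.mem_bot] at h3
    exact Subtype.ext (sub_eq_zero.mp h3)
  have hsur : Function.Surjective f := by
    intro m
    obtain ⟨y, hy⟩ := hsurj m
    obtain ⟨a, b, ha, hb, hab⟩ := Submodule.codisjoint_iff_exists_add_eq.mp hq.codisjoint y
    refine ⟨⟨b, hb⟩, ?_⟩
    have : π₀ a = 0 := ha
    simp only [f, LinearMap.comp_apply, Submodule.subtype_apply]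
    rw [← hy, ← hab, map_add, this, zero_add]
  let e := LinearEquiv.ofBijective f ⟨hinj, hsur⟩
  refine Module.Projective.of_split (q.subtype ∘ₗ e.symm.toLinearMap) π₀ ?_
  ext m
  have : π₀ ((e.symm m : q) : M →₀ R) = f (e.symm m) := rfl
  simp only [LinearMap.comp_apply, LinearMap.id_apply, LinearEquiv.coe_coe,
    Submodule.subtype_apply]
  rw [this]
  show e (e.symm m) = m
  exact e.apply_symm_apply m


theorem exists_integral
    (hproj : letI := trivialModule k H; Module.Projective H k) :
    ∃ Λ : H, counit (R := k) Λ = 1 ∧ ∀ h : H, h * Λ = counit (R := k) h • Λ := by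
  letI := trivialModule k H
  have hsmul : ∀ (h : H) (c : k), h • c = counit (R := k) h * c := fun _ _ => rfl
  let φ : H →ₗ[H] k :=
    { toFun := fun x => counit (R := k) x
      map_add' := fun x y => map_add _ x y
      map_smul' := fun h x => by
        simp only [smul_eq_mul, RingHom.id_apply, Bialgebra.counit_mul, hsmul] }
  have hsurj : Function.Surjective φ := fun c =>
    ⟨algebraMap k H c, by simp [φ, Bialgebra.counit_algebraMap]⟩
  obtain ⟨s, hs⟩ := Module.projective_lifting_property φ (LinearMap.id) hsurj
  refine ⟨s 1, ?_, ?_⟩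
  · exact congrFun (congrArg DFunLike.coe hs) 1
  · intro h
    have h1 : h * s 1 = s (h • (1 : k)) := by
      rw [map_smul]; rfl
    have h2 : counit (R := k) h • s 1 = s ((algebraMap k H (counit (R := k) h)) • (1 : k)) := by
      rw [map_smul, Algebra.smul_def]; rfl
    rw [h1, h2, hsmul, hsmul, Bialgebra.counit_algebraMap]


end Final

/-- Let `H` be a finite-dimensional Hopf algebra over a field `k` such
that the trivial module `𝟙` (i.e. `k` with `H`-action through the counit) is projective.
Then every `H`-module is projective, and hence `H` is semisimple. -/
theorem stmt9 (k H : Type*) [Field k] [Ring H] [HopfAlgebra k H] [FiniteDimensional k H]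
    (hproj : letI := trivialModule k H; Module.Projective H k) :
    (∀ (M : Type*) [AddCommGroup M] [Module H M], Module.Projective H M) ∧
      IsSemisimpleRing H := by
  obtain ⟨Λ, hΛ1, hΛ⟩ := exists_integral hproj
  have hss : IsSemisimpleRing H := Stmt9Aux.isSemisimpleRing_of_integral Λ hΛ hΛ1
  exact ⟨fun M _ _ => projective_of_isSemisimpleRing H M, hss⟩
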